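/- arXiv:2105.03006 — 2 statements merged into one kernel-verified Lean document; each statement's English description precedes it below -/
import Mathlib

section
/- In a simple voting game W on [n], suppose player j weakly dominates player i. Then for every subset S⊆[n] with i,j∈S, the NO-efficacy scores satisfy α⁻_i(S\{i}) ≤ α⁻_j(S\{j}) and α⁻_i(S\{i,j}) ≤ α⁻_j(S\{i,j}). -/
open Finset

variable {α : Type*} [Fintype α] [DecidableEq α]

/-- A simple voting game on the player set `α`: a monotone collection of winning
coalitions in which the empty coalition loses and the full coalition wins. -/
def SimpleVotingGame (W : Finset (Finset α)) : Prop :=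
  (∀ S T : Finset α, S ∈ W → S ⊆ T → T ∈ W) ∧ (∅ : Finset α) ∉ W ∧ (univ : Finset α) ∈ W

/-- Player `i` is YES-decisive in the division `S`. -/
def YesDecisive (W : Finset (Finset α)) (i : α) (S : Finset α) : Prop :=
  i ∈ S ∧ S ∈ W ∧ S.erase i ∉ W

/-- Player `i` is NO-decisive in the division `S`. -/
def NoDecisive (W : Finset (Finset α)) (i : α) (S : Finset α) : Prop :=
  i ∉ S ∧ S ∉ W ∧ insert i S ∈ W

/-- The loyal children of a winning division `S`: the winning divisions `S \ {k}`, `k ∈ S`. -/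
def LCwin (W : Finset (Finset α)) (S : Finset α) : Finset (Finset α) :=
  (S.image fun k => S.erase k).filter (· ∈ W)

/-- The loyal children of a losing division `S`: the losing divisions `S ∪ {k}`, `k ∉ S`. -/
def LCloss (W : Finset (Finset α)) (S : Finset α) : Finset (Finset α) :=
  (Sᶜ.image fun k => insert k S).filter (· ∉ W)

/-- The YES-efficacy score `α⁺_i(S)`: `1` if `i` is YES-decisive in `S`, `0` if `S` is
losing or `i ∉ S`, and otherwise the arithmetic mean of `α⁺_i` over the loyal children. -/
noncomputable def alphaPlus (W : Finset (Finset α)) (i : α) (S : Finset α) : ℝ :=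
  if i ∈ S ∧ S ∈ W ∧ S.erase i ∉ W then 1
  else if S ∉ W ∨ i ∉ S then 0
  else (∑ T ∈ (LCwin W S).attach, alphaPlus W i T.1) / (LCwin W S).card
termination_by S.card
decreasing_by
  obtain ⟨T, hT⟩ := T
  simp only [LCwin, Finset.mem_filter, Finset.mem_image] at hT
  obtain ⟨⟨k, hk, rfl⟩, -⟩ := hT
  simpa using Finset.card_erase_lt_of_mem hk

/-- The NO-efficacy score `α⁻_i(S)`: `1` if `i` is NO-decisive in `S`, `0` if `S` is
winning or `i ∈ S`, and otherwise the arithmetic mean of `α⁻_i` over the loyal children. -/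
noncomputable def alphaMinus (W : Finset (Finset α)) (i : α) (S : Finset α) : ℝ :=
  if i ∉ S ∧ S ∉ W ∧ insert i S ∈ W then 1
  else if S ∈ W ∨ i ∈ S then 0
  else (∑ T ∈ (LCloss W S).attach, alphaMinus W i T.1) / (LCloss W S).card
termination_by Sᶜ.card
decreasing_by
  obtain ⟨T, hT⟩ := T
  simp only [LCloss, Finset.mem_filter, Finset.mem_image] at hT
  obtain ⟨⟨k, hk, rfl⟩, -⟩ := hT
  rw [Finset.compl_insert]
  exact Finset.card_erase_lt_of_mem hk

/-- The efficacy score `α_i(S) = α⁺_i(S) + α⁻_i(S)`. -/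
noncomputable def alphaScore (W : Finset (Finset α)) (i : α) (S : Finset α) : ℝ :=
  alphaPlus W i S + alphaMinus W i S

/-- The Recursive Measure of YES-voting power (a priori, equiprobable divisions). -/
noncomputable def RMplus (W : Finset (Finset α)) (i : α) : ℝ :=
  (1 / 2 ^ Fintype.card α) * ∑ S : Finset α, alphaPlus W i S

/-- The Recursive Measure of NO-voting power (a priori, equiprobable divisions). -/
noncomputable def RMminus (W : Finset (Finset α)) (i : α) : ℝ :=
  (1 / 2 ^ Fintype.card α) * ∑ S : Finset α, alphaMinus W i S

/-- The Recursive Measure of voting power of player `i` (a priori):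
`RM_i = 2^{-m} · Σ_S α_i(S)` where `m` is the number of players. -/
noncomputable def RM (W : Finset (Finset α)) (i : α) : ℝ :=
  (1 / 2 ^ Fintype.card α) * ∑ S : Finset α, alphaScore W i S

/-- `d` is a dummy voter: `d` is decisive in no division. -/
def IsDummy (W : Finset (Finset α)) (d : α) : Prop :=
  ∀ S : Finset α, d ∉ S → (insert d S ∈ W ↔ S ∈ W)

/-- Player `j` weakly dominates player `i`. -/
def WeaklyDominates (W : Finset (Finset α)) (j i : α) : Prop :=
  ∀ S : Finset α, i ∉ S → j ∉ S → insert i S ∈ W → insert j S ∈ W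

/-- `What` is the game obtained from `W` by player `j` donating its vote to player `i`. -/
def Donation (W What : Finset (Finset α)) (i j : α) : Prop :=
  ∀ S : Finset α, i ∉ S → j ∉ S →
    (insert i (insert j S) ∈ What ↔ insert i (insert j S) ∈ W) ∧
    (insert i S ∈ What ↔ insert i (insert j S) ∈ W) ∧
    (insert j S ∈ What ↔ S ∈ W) ∧
    (S ∈ What ↔ S ∈ W)

/-- `What` is obtained from `W` by inducing a (weak, symmetric) quarrel between `i` and `j`. -/
def Quarrel (W What : Finset (Finset α)) (i j : α) : Prop :=
  ∀ S : Finset α, i ∉ S → j ∉ S →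
    (insert i (insert j S) ∈ What ↔ (insert i S ∈ W ∨ insert j S ∈ W)) ∧
    (S ∈ What ↔ (insert i S ∈ W ∧ insert j S ∈ W)) ∧
    (insert i S ∈ What ↔ insert i S ∈ W) ∧
    (insert j S ∈ What ↔ insert j S ∈ W)

/-- The voting-independent (product) probability of a division `S`, given the
individual YES-vote probabilities `p`. -/
noncomputable def prodDist (p : α → ℝ) (S : Finset α) : ℝ :=
  (∏ k ∈ S, p k) * ∏ k ∈ Sᶜ, (1 - p k)

/-- The generalized Recursive Measure of YES-voting power under a
voting-independent probability distribution with vote probabilities `p`. -/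
noncomputable def RMplusP (W : Finset (Finset α)) (p : α → ℝ) (i : α) : ℝ :=
  ∑ S : Finset α, alphaPlus W i S * prodDist p S

/-- The generalized Recursive Measure of NO-voting power under a
voting-independent probability distribution with vote probabilities `p`. -/
noncomputable def RMminusP (W : Finset (Finset α)) (p : α → ℝ) (i : α) : ℝ :=
  ∑ S : Finset α, alphaMinus W i S * prodDist p S

section Aux

variable (W : Finset (Finset α))

lemma LCloss_eq (S : Finset α) :
    LCloss W S = (Sᶜ.filter fun k => insert k S ∉ W).image (fun k => insert k S) := by
  unfold LCloss
  rw [Finset.filter_image]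

lemma insert_injOn (S : Finset α) :
    ∀ x ∈ Sᶜ.filter (fun k => insert k S ∉ W), ∀ y ∈ Sᶜ.filter (fun k => insert k S ∉ W),
      insert x S = insert y S → x = y := by
  intro x hx y hy h
  simp only [Finset.mem_filter, Finset.mem_compl] at hx hy
  have : x ∈ insert y S := h ▸ Finset.mem_insert_self x S
  rcases Finset.mem_insert.mp this with h' | h'
  · exact h'
  · exact absurd h' hx.1

lemma card_LCloss (S : Finset α) :
    (LCloss W S).card = (Sᶜ.filter fun k => insert k S ∉ W).card := by
  rw [LCloss_eq]
  exact Finset.card_image_of_injOn (insert_injOn W S)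

lemma sum_LCloss (S : Finset α) (f : Finset α → ℝ) :
    ∑ T ∈ (LCloss W S).attach, f T.1
      = ∑ k ∈ Sᶜ.filter (fun k => insert k S ∉ W), f (insert k S) := by
  rw [Finset.sum_attach (LCloss W S) f, LCloss_eq, Finset.sum_image (insert_injOn W S)]

lemma alphaMinus_of_mem {i : α} {S : Finset α} (h : i ∈ S) : alphaMinus W i S = 0 := by
  rw [alphaMinus]
  simp [h]

lemma alphaMinus_of_win {i : α} {S : Finset α} (h : S ∈ W) : alphaMinus W i S = 0 := by
  rw [alphaMinus]
  simp [h]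

lemma alphaMinus_decisive {i : α} {S : Finset α} (h : NoDecisive W i S) :
    alphaMinus W i S = 1 := by
  rw [alphaMinus]
  exact if_pos ⟨h.1, h.2.1, h.2.2⟩

lemma alphaMinus_rec {i : α} {S : Finset α} (h1 : i ∉ S) (h2 : S ∉ W)
    (h3 : insert i S ∉ W) :
    alphaMinus W i S
      = (∑ k ∈ Sᶜ.filter (fun k => insert k S ∉ W), alphaMinus W i (insert k S))
        / (Sᶜ.filter (fun k => insert k S ∉ W)).card := by
  rw [alphaMinus, if_neg (by tauto), if_neg (by tauto), sum_LCloss, card_LCloss]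

lemma alphaMinus_nonneg (i : α) (S : Finset α) : 0 ≤ alphaMinus W i S := by
  rw [alphaMinus]
  split
  · norm_num
  split
  · exact le_refl 0
  · apply div_nonneg
    · exact Finset.sum_nonneg fun T _ => alphaMinus_nonneg i T.1
    · positivity
termination_by Sᶜ.card
decreasing_by
  obtain ⟨T, hT⟩ := T
  simp only [LCloss, Finset.mem_filter, Finset.mem_image] at hT
  obtain ⟨⟨k, hk, rfl⟩, -⟩ := hT
  rw [Finset.compl_insert]
  exact Finset.card_erase_lt_of_mem hk

lemma alphaMinus_le_one (i : α) (S : Finset α) : alphaMinus W i S ≤ 1 := by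
  rw [alphaMinus]
  split
  · exact le_refl 1
  split
  · norm_num
  · rcases Nat.eq_zero_or_pos (LCloss W S).card with hc | hc
    · rw [Finset.card_eq_zero] at hc
      simp [hc]
    · rw [div_le_one (by exact_mod_cast hc)]
      calc ∑ T ∈ (LCloss W S).attach, alphaMinus W i T.1
          ≤ ∑ _T ∈ (LCloss W S).attach, (1 : ℝ) :=
            Finset.sum_le_sum fun T _ => alphaMinus_le_one i T.1
        _ = (LCloss W S).card := by simp
termination_by Sᶜ.card
decreasing_by
  obtain ⟨T, hT⟩ := T
  simp only [LCloss, Finset.mem_filter, Finset.mem_image] at hT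
  obtain ⟨⟨k, hk, rfl⟩, -⟩ := hT
  rw [Finset.compl_insert]
  exact Finset.card_erase_lt_of_mem hk

end Aux

section Key

lemma avg_ineq {a b : ℝ} {n m : ℕ} (hn : 1 ≤ n) (hnm : n ≤ m) (ha : 0 ≤ a)
    (han : a ≤ n) (hb : a + ((m : ℝ) - n) ≤ b) : a / n ≤ b / m := by
  have hn' : (0 : ℝ) < n := by exact_mod_cast hn
  have hm' : (0 : ℝ) < m := by
    have : (1:ℕ) ≤ m := le_trans hn hnm
    exact_mod_cast this
  have hnm' : (n : ℝ) ≤ m := by exact_mod_cast hnm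
  rw [div_le_div_iff₀ hn' hm']
  nlinarith

lemma key_ineq (W : Finset (Finset α)) (hW : SimpleVotingGame W) (i j : α) (hij : i ≠ j)
    (hdom : WeaklyDominates W j i) :
    ∀ N : ℕ, ∀ T : Finset α, Tᶜ.card ≤ N → i ∉ T → j ∉ T →
      alphaMinus W i (insert j T) ≤ alphaMinus W j (insert i T) ∧
      alphaMinus W i T ≤ alphaMinus W j T := by
  obtain ⟨hmono, -, -⟩ := hW
  intro N
  induction N with
  | zero =>
    intro T hT hi hj
    exact absurd (Finset.card_pos.mpr ⟨i, Finset.mem_compl.mpr hi⟩) (by omega)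
  | succ N IH =>
    intro T hcard hi hj
    have hIH : ∀ k : α, k ∉ T → k ≠ i → k ≠ j →
        alphaMinus W i (insert j (insert k T)) ≤ alphaMinus W j (insert i (insert k T)) ∧
        alphaMinus W i (insert k T) ≤ alphaMinus W j (insert k T) := by
      intro k hk hki hkj
      apply IH
      · rw [Finset.compl_insert, Finset.card_erase_of_mem (Finset.mem_compl.mpr hk)]
        have : 0 < Tᶜ.card := Finset.card_pos.mpr ⟨k, Finset.mem_compl.mpr hk⟩
        omega
      · simp [hki.symm, hi]
      · simp [hkj.symm, hj]
    have hA : alphaMinus W i (insert j T) ≤ alphaMinus W j (insert i T) := by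
      by_cases hjT : insert j T ∈ W
      · rw [alphaMinus_of_win W hjT]
        exact alphaMinus_nonneg W j _
      · have hiT : insert i T ∉ W := fun h => hjT (hdom T hi hj h)
        have hinotin : i ∉ insert j T := by simp [hij, hi]
        have hjnotin : j ∉ insert i T := by simp [hij.symm, hj]
        by_cases h2 : insert i (insert j T) ∈ W
        · have e : insert j (insert i T) = insert i (insert j T) := Finset.insert_comm j i T
          rw [alphaMinus_decisive W ⟨hinotin, hjT, h2⟩,
            alphaMinus_decisive W ⟨hjnotin, hiT, e ▸ h2⟩]
        · have e : insert j (insert i T) = insert i (insert j T) := Finset.insert_comm j i T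
          rw [alphaMinus_rec W hinotin hjT h2, alphaMinus_rec W hjnotin hiT (e ▸ h2)]
          set KL := (insert j T)ᶜ.filter (fun k => insert k (insert j T) ∉ W) with hKL
          set KR := (insert i T)ᶜ.filter (fun k => insert k (insert i T) ∉ W) with hKR
          set φ : α → α := fun k => if k = i then j else k with hφ
          have hiKL : i ∈ KL := by
            rw [hKL, Finset.mem_filter, Finset.mem_compl]
            exact ⟨hinotin, h2⟩
          have hmemKL : ∀ k ∈ KL, k ∉ T ∧ k ≠ j ∧ insert k (insert j T) ∉ W := by
            intro k hk
            rw [hKL, Finset.mem_filter, Finset.mem_compl, Finset.mem_insert] at hk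
            tauto
          have hmaps : ∀ k ∈ KL, φ k ∈ KR := by
            intro k hk
            obtain ⟨hkT, hkj, hkW⟩ := hmemKL k hk
            rw [hKR, Finset.mem_filter, Finset.mem_compl, Finset.mem_insert]
            by_cases hki : k = i
            · subst hki
              simp only [hφ, if_pos rfl]
              refine ⟨by tauto, ?_⟩
              rwa [Finset.insert_comm]
            · simp only [hφ, if_neg hki]
              refine ⟨by tauto, ?_⟩
              intro hw
              apply hkW
              rw [Finset.insert_comm] at hw ⊢
              exact hdom (insert k T) (by simp [hi, Ne.symm hki]) (by simp [hj, Ne.symm hkj]) hw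
          have hjKL : j ∉ KL := by
            rw [hKL, Finset.mem_filter, Finset.mem_compl]
            simp
          have hinj : ∀ x ∈ KL, ∀ y ∈ KL, φ x = φ y → x = y := by
            intro x hx y hy hxy
            simp only [hφ] at hxy
            by_cases h1 : x = i <;> by_cases h2 : y = i
            · rw [h1, h2]
            · rw [if_pos h1, if_neg h2] at hxy
              subst hxy
              exact absurd hy hjKL
            · rw [if_neg h1, if_pos h2] at hxy
              subst hxy
              exact absurd hx hjKL
            · rwa [if_neg h1, if_neg h2] at hxy
          have hsub : KL.image φ ⊆ KR := Finset.image_subset_iff.mpr hmaps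
          have hcardim : (KL.image φ).card = KL.card := Finset.card_image_of_injOn hinj
          have hcardle : KL.card ≤ KR.card := hcardim ▸ Finset.card_le_card hsub
          have hterm : ∀ k ∈ KL,
              alphaMinus W i (insert k (insert j T)) ≤
                alphaMinus W j (insert (φ k) (insert i T)) := by
            intro k hk
            obtain ⟨hkT, hkj, hkW⟩ := hmemKL k hk
            by_cases hki : k = i
            · rw [hki]
              simp only [hφ, if_pos rfl]
              rw [alphaMinus_of_mem W (Finset.mem_insert_self _ _),
                alphaMinus_of_mem W (Finset.mem_insert_self _ _)]
            · simp only [hφ, if_neg hki]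
              have := (hIH k hkT hki hkj).1
              rwa [Finset.insert_comm j k, Finset.insert_comm i k] at this
          have hsum1 : ∑ k ∈ KL, alphaMinus W i (insert k (insert j T))
              ≤ ∑ k ∈ KL.image φ, alphaMinus W j (insert k (insert i T)) := by
            rw [Finset.sum_image hinj]
            exact Finset.sum_le_sum hterm
          have hextra : ∀ k ∈ KR \ KL.image φ,
              alphaMinus W j (insert k (insert i T)) = 1 := by
            intro k hk
            rw [Finset.mem_sdiff] at hk
            obtain ⟨hkR, hkim⟩ := hk
            rw [hKR, Finset.mem_filter, Finset.mem_compl, Finset.mem_insert] at hkR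
            obtain ⟨hki', hkW⟩ := hkR
            push_neg at hki'
            obtain ⟨hki, hkT⟩ := hki'
            have hkj : k ≠ j := by
              rintro rfl
              exact hkim (Finset.mem_image.mpr ⟨i, hiKL, by simp [hφ]⟩)
            have hkKL : k ∉ KL := by
              intro h
              exact hkim (Finset.mem_image.mpr ⟨k, h, by simp [hφ, hki]⟩)
            have hwin : insert k (insert j T) ∈ W := by
              by_contra hnw
              apply hkKL
              rw [hKL, Finset.mem_filter, Finset.mem_compl, Finset.mem_insert]
              exact ⟨by tauto, hnw⟩
            apply alphaMinus_decisive W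
            refine ⟨?_, hkW, ?_⟩
            · simp [hkj.symm, hij.symm, hj]
            · exact hmono _ _ hwin (by
                intro x hx
                simp only [Finset.mem_insert] at hx ⊢
                tauto)
          have hLpos : 1 ≤ KL.card := Finset.card_pos.mpr ⟨i, hiKL⟩
          have haux : ∑ k ∈ KR, alphaMinus W j (insert k (insert i T))
              = (∑ k ∈ KR \ KL.image φ, alphaMinus W j (insert k (insert i T)))
                + ∑ k ∈ KL.image φ, alphaMinus W j (insert k (insert i T)) :=
            (Finset.sum_sdiff hsub).symm
          have hdiff : ∑ k ∈ KR \ KL.image φ, alphaMinus W j (insert k (insert i T))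
              = ((KR.card : ℝ) - KL.card) := by
            rw [Finset.sum_congr rfl hextra]
            rw [Finset.sum_const, Finset.card_sdiff_of_subset hsub, hcardim, nsmul_eq_mul, mul_one]
            exact Nat.cast_sub hcardle
          apply avg_ineq hLpos hcardle
          · exact Finset.sum_nonneg fun k _ => alphaMinus_nonneg W i _
          · calc ∑ k ∈ KL, alphaMinus W i (insert k (insert j T))
                ≤ ∑ _k ∈ KL, (1 : ℝ) := Finset.sum_le_sum fun k _ => alphaMinus_le_one W i _
              _ = KL.card := by simp
          · rw [haux, hdiff]
            linarith [hsum1]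
    refine ⟨hA, ?_⟩
    by_cases hT : T ∈ W
    · rw [alphaMinus_of_win W hT]
      exact alphaMinus_nonneg W j _
    · by_cases hjT : insert j T ∈ W
      · rw [alphaMinus_decisive W ⟨hj, hT, hjT⟩]
        exact alphaMinus_le_one W i _
      · have hiT : insert i T ∉ W := fun h => hjT (hdom T hi hj h)
        rw [alphaMinus_rec W hi hT hiT, alphaMinus_rec W hj hT hjT]
        set K := Tᶜ.filter (fun k => insert k T ∉ W) with hK
        set φ : α → α := fun k => if k = i then j else if k = j then i else k with hφ
        have hiK : i ∈ K := by rw [hK, Finset.mem_filter, Finset.mem_compl]; exact ⟨hi, hiT⟩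
        have hjK : j ∈ K := by rw [hK, Finset.mem_filter, Finset.mem_compl]; exact ⟨hj, hjT⟩
        have hφmaps : ∀ k ∈ K, φ k ∈ K := by
          intro k hk
          simp only [hφ]
          split_ifs
          · exact hjK
          · exact hiK
          · exact hk
        have hφinv : ∀ k, φ (φ k) = k := by
          intro k
          simp only [hφ]
          split_ifs <;> simp_all
        have hswap : ∑ k ∈ K, alphaMinus W j (insert k T)
            = ∑ k ∈ K, alphaMinus W j (insert (φ k) T) := by
          apply Finset.sum_nbij' φ φ hφmaps hφmaps (fun k _ => hφinv k) (fun k _ => hφinv k)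
          intro k hk
          rw [hφinv]
        have hKpos : (0 : ℝ) < K.card := by
          exact_mod_cast Finset.card_pos.mpr ⟨i, hiK⟩
        rw [div_le_div_iff_of_pos_right hKpos, hswap]
        apply Finset.sum_le_sum
        intro k hk
        have hkT : k ∉ T := Finset.mem_compl.mp (Finset.mem_filter.mp (hK ▸ hk)).1
        by_cases hki : k = i
        · rw [hki]
          simp only [hφ, if_pos rfl]
          rw [alphaMinus_of_mem W (Finset.mem_insert_self _ _),
            alphaMinus_of_mem W (Finset.mem_insert_self _ _)]
        · by_cases hkj : k = j
          · subst hkj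
            simp only [hφ, if_neg hki, if_pos rfl]
            exact hA
          · simp only [hφ, if_neg hki, if_neg hkj]
            exact (hIH k hkT hki hkj).2

end Key

/-- weak dominance and NO-efficacy scores. -/
theorem dominance_alphaMinus {n : ℕ} (W : Finset (Finset (Fin n)))
    (hW : SimpleVotingGame W) (i j : Fin n)
    (hdom : WeaklyDominates W j i) :
    ∀ S : Finset (Fin n), i ∈ S → j ∈ S →
      alphaMinus W i (S.erase i) ≤ alphaMinus W j (S.erase j) ∧
      alphaMinus W i ((S.erase i).erase j) ≤ alphaMinus W j ((S.erase i).erase j) := by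
  intro S hiS hjS
  by_cases hij : i = j
  · subst hij
    exact ⟨le_refl _, le_refl _⟩
  · set T := (S.erase i).erase j with hT
    have hiT : i ∉ T := fun h => Finset.notMem_erase i S (Finset.mem_of_mem_erase h)
    have hjT : j ∉ T := Finset.notMem_erase j _
    have e1 : insert j T = S.erase i :=
      Finset.insert_erase (Finset.mem_erase.mpr ⟨fun h => hij h.symm, hjS⟩)
    have e2 : insert i T = S.erase j := by
      rw [hT, Finset.erase_right_comm]
      exact Finset.insert_erase (Finset.mem_erase.mpr ⟨hij, hiS⟩)
    have hk := key_ineq W hW i j hij hdom Tᶜ.card T le_rfl hiT hjT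
    refine ⟨?_, hk.2⟩
    rw [← e1, ← e2]
    exact hk.1
end

section
/- Let W be a simple voting game on [n] and let Ŵ be the game obtained when player j donates its vote to player i. Then for every S⊆[n] with i,j∉S, the YES-efficacy scores satisfy α̂⁺_i(S∪{i}) ≥ max( α⁺_i(S∪{i}), α⁺_j(S∪{j}) ) and α̂⁺_i(S∪{i,j}) ≥ max( α⁺_i(S∪{i,j}), α⁺_j(S∪{i,j}) ), where α̂ denotes efficacy scores computed in Ŵ and α those computed in W. -/
open Finset

variable {α : Type*} [Fintype α] [DecidableEq α]

set_option linter.unusedSectionVars false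
variable {α : Type*} [Fintype α] [DecidableEq α]

lemma mem_LCwin' {W : Finset (Finset α)} {S t : Finset α} :
    t ∈ LCwin W S ↔ (∃ k ∈ S, S.erase k = t) ∧ t ∈ W := by
  simp [LCwin]

theorem alphaPlus_nonneg (W : Finset (Finset α)) (i : α) (S : Finset α) :
    0 ≤ alphaPlus W i S := by
  rw [alphaPlus]
  split
  · norm_num
  split
  · norm_num
  · apply div_nonneg _ (by positivity)
    apply Finset.sum_nonneg
    intro t ht
    exact alphaPlus_nonneg W i t.1
termination_by S.card
decreasing_by
  obtain ⟨T, hT⟩ := t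
  simp only [LCwin, Finset.mem_filter, Finset.mem_image] at hT
  obtain ⟨⟨k, hk, rfl⟩, -⟩ := hT
  simpa using Finset.card_erase_lt_of_mem hk

theorem alphaPlus_le_one (W : Finset (Finset α)) (i : α) (S : Finset α) :
    alphaPlus W i S ≤ 1 := by
  rw [alphaPlus]
  split
  · norm_num
  split
  · norm_num
  · rcases Nat.eq_zero_or_pos (LCwin W S).card with h0 | hpos
    · rw [h0]
      norm_num
    · rw [div_le_one (by exact_mod_cast hpos)]
      calc ∑ T ∈ (LCwin W S).attach, alphaPlus W i T.1
          ≤ ∑ _T ∈ (LCwin W S).attach, (1 : ℝ) := by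
            apply Finset.sum_le_sum
            intro t ht
            exact alphaPlus_le_one W i t.1
        _ = (LCwin W S).card := by simp
termination_by S.card
decreasing_by
  obtain ⟨T, hT⟩ := t
  simp only [LCwin, Finset.mem_filter, Finset.mem_image] at hT
  obtain ⟨⟨k, hk, rfl⟩, -⟩ := hT
  simpa using Finset.card_erase_lt_of_mem hk

lemma alphaPlus_of_notMem {W : Finset (Finset α)} {i : α} {S : Finset α} (h : i ∉ S) :
    alphaPlus W i S = 0 := by
  rw [alphaPlus, if_neg (fun hc => h hc.1), if_pos (Or.inr h)]

lemma alphaPlus_of_not_win {W : Finset (Finset α)} {i : α} {S : Finset α} (h : S ∉ W) :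
    alphaPlus W i S = 0 := by
  rw [alphaPlus, if_neg (fun hc => h hc.2.1), if_pos (Or.inl h)]

lemma alphaPlus_of_decisive {W : Finset (Finset α)} {i : α} {S : Finset α}
    (h1 : i ∈ S) (h2 : S ∈ W) (h3 : S.erase i ∉ W) :
    alphaPlus W i S = 1 := by
  rw [alphaPlus, if_pos ⟨h1, h2, h3⟩]

lemma alphaPlus_of_mean {W : Finset (Finset α)} {i : α} {S : Finset α}
    (h1 : i ∈ S) (h2 : S ∈ W) (h3 : S.erase i ∈ W) :
    alphaPlus W i S = (∑ t ∈ LCwin W S, alphaPlus W i t) / (LCwin W S).card := by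
  rw [alphaPlus, if_neg (fun hc => hc.2.2 h3), if_neg (by push_neg; exact ⟨h2, h1⟩),
    Finset.sum_attach]

/-- Comparison of means via an injection. -/
lemma mean_le_mean {β : Type*} [DecidableEq β] {A B : Finset β} (φ : β → β)
    (f g : β → ℝ) (hA : A.Nonempty)
    (hinj : Set.InjOn φ A) (hmap : ∀ t ∈ A, φ t ∈ B)
    (hf0 : ∀ t ∈ A, 0 ≤ f t) (hf1 : ∀ t ∈ A, f t ≤ 1)
    (hfg : ∀ t ∈ A, f t ≤ g (φ t))
    (hex : ∀ s ∈ B, s ∉ A.image φ → g s = 1) :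
    (∑ t ∈ A, f t) / A.card ≤ (∑ s ∈ B, g s) / B.card := by
  have himsub : A.image φ ⊆ B := by
    intro s hs
    obtain ⟨t, ht, rfl⟩ := Finset.mem_image.mp hs
    exact hmap t ht
  have hcard : (A.image φ).card = A.card := Finset.card_image_of_injOn hinj
  have hcardle : A.card ≤ B.card := hcard ▸ Finset.card_le_card himsub
  have hApos : (0 : ℝ) < A.card := by exact_mod_cast Finset.card_pos.mpr hA
  have hBpos : (0 : ℝ) < B.card := by
    exact_mod_cast lt_of_lt_of_le (Finset.card_pos.mpr hA) hcardle
  have hsum1 : ∑ s ∈ B, g s = ∑ s ∈ A.image φ, g s + ∑ s ∈ B \ A.image φ, g s := by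
    rw [Finset.sum_sdiff_eq_sub himsub]; ring
  have hsum2 : ∑ s ∈ B \ A.image φ, g s = (B.card - A.card : ℝ) := by
    rw [Finset.sum_congr rfl (fun s hs => hex s (Finset.mem_sdiff.mp hs).1 (Finset.mem_sdiff.mp hs).2)]
    rw [Finset.sum_const, Finset.card_sdiff_of_subset himsub, hcard, nsmul_eq_mul, mul_one,
      Nat.cast_sub hcardle]
  have hsum3 : ∑ t ∈ A, f t ≤ ∑ s ∈ A.image φ, g s := by
    rw [Finset.sum_image (fun x hx y hy h => hinj hx hy h)]
    exact Finset.sum_le_sum hfg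
  have hSle : ∑ t ∈ A, f t ≤ (A.card : ℝ) := by
    calc ∑ t ∈ A, f t ≤ ∑ t ∈ A, (1:ℝ) := Finset.sum_le_sum hf1
      _ = A.card := by simp
  have hS0 : 0 ≤ ∑ t ∈ A, f t := Finset.sum_nonneg hf0
  rw [div_le_div_iff₀ hApos hBpos]
  have : (∑ t ∈ A, f t) * B.card = (∑ t ∈ A, f t) * A.card + (∑ t ∈ A, f t) * (B.card - A.card : ℝ) := by ring
  rw [this, hsum1, hsum2]
  have h1 : (∑ t ∈ A, f t) * (B.card - A.card : ℝ) ≤ (A.card : ℝ) * (B.card - A.card) := by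
    apply mul_le_mul_of_nonneg_right hSle
    have : (A.card : ℝ) ≤ B.card := by exact_mod_cast hcardle
    linarith
  have h2 : (∑ t ∈ A, f t) * A.card ≤ (∑ s ∈ A.image φ, g s) * A.card :=
    mul_le_mul_of_nonneg_right hsum3 (le_of_lt hApos)
  nlinarith [hsum3]
set_option linter.unusedSectionVars false

section SwapLemmas
variable {α : Type*} [DecidableEq α] {i j : α}

lemma swap_image_fix {T : Finset α} (hi : i ∉ T) (hj : j ∉ T) :
    T.image (Equiv.swap i j) = T := by
  rw [Finset.image_congr (g := id) ?_, Finset.image_id]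
  intro x hx
  exact Equiv.swap_apply_of_ne_of_ne (fun h => hi (h ▸ hx)) (fun h => hj (h ▸ hx))

lemma swap_image_insert_j {T : Finset α} (hi : i ∉ T) (hj : j ∉ T) :
    (insert j T).image (Equiv.swap i j) = insert i T := by
  rw [Finset.image_insert, Equiv.swap_apply_right, swap_image_fix hi hj]

lemma swap_image_insert_i {T : Finset α} (hi : i ∉ T) (hj : j ∉ T) :
    (insert i T).image (Equiv.swap i j) = insert j T := by
  rw [Finset.image_insert, Equiv.swap_apply_left, swap_image_fix hi hj]

lemma swap_image_insert_ij {T : Finset α} (hi : i ∉ T) (hj : j ∉ T) :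
    (insert i (insert j T)).image (Equiv.swap i j) = insert i (insert j T) := by
  rw [Finset.image_insert, Equiv.swap_apply_left, swap_image_insert_j hi hj,
    Finset.insert_comm]
end SwapLemmas

section MainLemmas
variable {α : Type*} [Fintype α] [DecidableEq α] {W What : Finset (Finset α)} {i j : α}

theorem key1 (hW : SimpleVotingGame W) (hij : i ≠ j) (hdon : Donation W What i j) :
    ∀ T : Finset α, i ∉ T → j ∉ T →
      alphaPlus W i (insert i T) ≤ alphaPlus What i (insert i T) ∧
      alphaPlus W j (insert j T) ≤ alphaPlus What i (insert i T) := by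
  intro T
  induction T using Finset.strongInduction with
  | _ T IH =>
  intro hiT hjT
  have hmono := hW.1
  obtain ⟨hd1, hd2, hd3, hd4⟩ := hdon T hiT hjT
  by_cases hUij : insert i (insert j T) ∈ W
  case neg =>
    have hU1 : insert i T ∉ W := fun h =>
      hUij (hmono _ _ h (Finset.insert_subset_insert i (Finset.subset_insert j T)))
    have hU2 : insert j T ∉ W := fun h => hUij (hmono _ _ h (Finset.subset_insert i _))
    constructor
    · rw [alphaPlus_of_not_win hU1]; exact alphaPlus_nonneg _ _ _
    · rw [alphaPlus_of_not_win hU2]; exact alphaPlus_nonneg _ _ _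
  case pos =>
  by_cases hTW : T ∈ W
  case neg =>
    have hone : alphaPlus What i (insert i T) = 1 := by
      apply alphaPlus_of_decisive (Finset.mem_insert_self i T) (hd2.mpr hUij)
      rw [Finset.erase_insert hiT]
      exact fun h => hTW (hd4.mp h)
    rw [hone]
    exact ⟨alphaPlus_le_one _ _ _, alphaPlus_le_one _ _ _⟩
  case pos =>
    have hU1W : insert i T ∈ W := hmono _ _ hTW (Finset.subset_insert i T)
    have hU2W : insert j T ∈ W := hmono _ _ hTW (Finset.subset_insert j T)
    have hU1hat : insert i T ∈ What := hd2.mpr hUij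
    have hThat : T ∈ What := hd4.mpr hTW
    have hTinB : T ∈ LCwin What (insert i T) :=
      mem_LCwin'.mpr ⟨⟨i, Finset.mem_insert_self i T, Finset.erase_insert hiT⟩, hThat⟩
    have hsub : ∀ k ∈ T, i ∉ T.erase k ∧ j ∉ T.erase k := fun k _ =>
      ⟨fun h => hiT (Finset.mem_of_mem_erase h), fun h => hjT (Finset.mem_of_mem_erase h)⟩
    rw [alphaPlus_of_mean (Finset.mem_insert_self i T) hU1hat
      (by rwa [Finset.erase_insert hiT])]
    constructor
    · -- a ≤ ahat
      rw [alphaPlus_of_mean (Finset.mem_insert_self i T) hU1W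
        (by rwa [Finset.erase_insert hiT])]
      apply mean_le_mean id (alphaPlus W i) (alphaPlus What i)
        ⟨T, mem_LCwin'.mpr ⟨⟨i, Finset.mem_insert_self i T, Finset.erase_insert hiT⟩, hTW⟩⟩
        Function.injective_id.injOn
      · -- hmap
        intro t ht
        obtain ⟨⟨k, hk, heq⟩, htW⟩ := mem_LCwin'.mp ht
        refine mem_LCwin'.mpr ⟨⟨k, hk, heq⟩, ?_⟩
        rcases Finset.mem_insert.mp hk with rfl | hkT
        · rw [← heq, Finset.erase_insert hiT]; exact hThat
        · have hik : i ≠ k := by rintro rfl; exact hiT hkT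
          have ht_eq : t = insert i (T.erase k) := heq ▸ Finset.erase_insert_of_ne hik
          obtain ⟨hiT', hjT'⟩ := hsub k hkT
          rw [ht_eq]
          exact ((hdon (T.erase k) hiT' hjT').2.1).mpr (hmono _ _ (ht_eq ▸ htW)
            (Finset.insert_subset_insert i (Finset.subset_insert j _)))
      · intro t _; exact alphaPlus_nonneg _ _ _
      · intro t _; exact alphaPlus_le_one _ _ _
      · -- hfg
        intro t ht
        obtain ⟨⟨k, hk, heq⟩, htW⟩ := mem_LCwin'.mp ht
        show alphaPlus W i t ≤ alphaPlus What i t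
        rcases Finset.mem_insert.mp hk with rfl | hkT
        · have ht_eq : t = T := by rw [← heq, Finset.erase_insert hiT]
          rw [ht_eq, alphaPlus_of_notMem hiT]
          exact alphaPlus_nonneg _ _ _
        · have hik : i ≠ k := by rintro rfl; exact hiT hkT
          have ht_eq : t = insert i (T.erase k) := heq ▸ Finset.erase_insert_of_ne hik
          obtain ⟨hiT', hjT'⟩ := hsub k hkT
          rw [ht_eq]
          exact (IH (T.erase k) (Finset.erase_ssubset hkT) hiT' hjT').1
      · -- hex
        intro s hs hsim
        obtain ⟨⟨k, hk, heq⟩, hsWhat⟩ := mem_LCwin'.mp hs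
        rw [Finset.image_id] at hsim
        have hsW : s ∉ W := fun h => hsim (mem_LCwin'.mpr ⟨⟨k, hk, heq⟩, h⟩)
        rcases Finset.mem_insert.mp hk with rfl | hkT
        · exact absurd (show s ∈ W by rw [← heq, Finset.erase_insert hiT]; exact hTW) hsW
        · have hik : i ≠ k := by rintro rfl; exact hiT hkT
          have hs_eq : s = insert i (T.erase k) := heq ▸ Finset.erase_insert_of_ne hik
          obtain ⟨hiT', hjT'⟩ := hsub k hkT
          apply alphaPlus_of_decisive
          · rw [hs_eq]; exact Finset.mem_insert_self i _
          · exact hsWhat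
          · rw [hs_eq, Finset.erase_insert hiT']
            intro hT'hat
            exact hsW (by
              rw [hs_eq]
              exact hmono _ _ ((hdon (T.erase k) hiT' hjT').2.2.2.mp hT'hat)
                (Finset.subset_insert i _))
    · -- b ≤ ahat
      rw [alphaPlus_of_mean (Finset.mem_insert_self j T) hU2W
        (by rwa [Finset.erase_insert hjT])]
      apply mean_le_mean (fun X => X.image (Equiv.swap i j)) (alphaPlus W j) (alphaPlus What i)
        ⟨T, mem_LCwin'.mpr ⟨⟨j, Finset.mem_insert_self j T, Finset.erase_insert hjT⟩, hTW⟩⟩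
        ((Finset.image_injective (Equiv.swap i j).injective).injOn)
      · -- hmap
        intro t ht
        obtain ⟨⟨k, hk, heq⟩, htW⟩ := mem_LCwin'.mp ht
        rcases Finset.mem_insert.mp hk with rfl | hkT
        · have ht_eq : t = T := by rw [← heq, Finset.erase_insert hjT]
          rw [ht_eq, swap_image_fix hiT hjT]
          exact hTinB
        · have hjk : j ≠ k := by rintro rfl; exact hjT hkT
          have hik : i ≠ k := by rintro rfl; exact hiT hkT
          have ht_eq : t = insert j (T.erase k) := heq ▸ Finset.erase_insert_of_ne hjk
          obtain ⟨hiT', hjT'⟩ := hsub k hkT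
          rw [ht_eq, swap_image_insert_j hiT' hjT']
          refine mem_LCwin'.mpr ⟨⟨k, Finset.mem_insert_of_mem hkT,
            Finset.erase_insert_of_ne hik⟩, ?_⟩
          exact ((hdon (T.erase k) hiT' hjT').2.1).mpr (hmono _ _ (ht_eq ▸ htW)
            (Finset.subset_insert i _))
      · intro t _; exact alphaPlus_nonneg _ _ _
      · intro t _; exact alphaPlus_le_one _ _ _
      · -- hfg
        intro t ht
        obtain ⟨⟨k, hk, heq⟩, htW⟩ := mem_LCwin'.mp ht
        rcases Finset.mem_insert.mp hk with rfl | hkT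
        · have ht_eq : t = T := by rw [← heq, Finset.erase_insert hjT]
          rw [ht_eq, alphaPlus_of_notMem hjT]
          exact alphaPlus_nonneg _ _ _
        · have hjk : j ≠ k := by rintro rfl; exact hjT hkT
          have ht_eq : t = insert j (T.erase k) := heq ▸ Finset.erase_insert_of_ne hjk
          obtain ⟨hiT', hjT'⟩ := hsub k hkT
          rw [ht_eq, swap_image_insert_j hiT' hjT']
          exact (IH (T.erase k) (Finset.erase_ssubset hkT) hiT' hjT').2
      · -- hex
        intro s hs hsim
        obtain ⟨⟨k, hk, heq⟩, hsWhat⟩ := mem_LCwin'.mp hs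
        rcases Finset.mem_insert.mp hk with rfl | hkT
        · exfalso
          apply hsim
          refine Finset.mem_image.mpr ⟨T, mem_LCwin'.mpr
            ⟨⟨j, Finset.mem_insert_self j T, Finset.erase_insert hjT⟩, hTW⟩, ?_⟩
          rw [swap_image_fix hiT hjT, ← heq, Finset.erase_insert hiT]
        · have hik : i ≠ k := by rintro rfl; exact hiT hkT
          have hjk : j ≠ k := by rintro rfl; exact hjT hkT
          have hs_eq : s = insert i (T.erase k) := heq ▸ Finset.erase_insert_of_ne hik
          obtain ⟨hiT', hjT'⟩ := hsub k hkT
          by_cases hjw : insert j (T.erase k) ∈ W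
          · exfalso
            apply hsim
            refine Finset.mem_image.mpr ⟨insert j (T.erase k), mem_LCwin'.mpr
              ⟨⟨k, Finset.mem_insert_of_mem hkT, Finset.erase_insert_of_ne hjk⟩, hjw⟩, ?_⟩
            rw [swap_image_insert_j hiT' hjT', hs_eq]
          · apply alphaPlus_of_decisive
            · rw [hs_eq]; exact Finset.mem_insert_self i _
            · exact hsWhat
            · rw [hs_eq, Finset.erase_insert hiT']
              intro hT'hat
              exact hjw (hmono _ _ ((hdon (T.erase k) hiT' hjT').2.2.2.mp hT'hat)
                (Finset.subset_insert j _))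
end MainLemmas
section MainLemmas2
variable {α : Type*} [Fintype α] [DecidableEq α] {W What : Finset (Finset α)} {i j : α}

theorem key2 (hW : SimpleVotingGame W) (hij : i ≠ j) (hdon : Donation W What i j) :
    ∀ T : Finset α, i ∉ T → j ∉ T →
      alphaPlus W i (insert i (insert j T)) ≤ alphaPlus What i (insert i (insert j T)) ∧
      alphaPlus W j (insert i (insert j T)) ≤ alphaPlus What i (insert i (insert j T)) := by
  intro T
  induction T using Finset.strongInduction with
  | _ T IH =>
  intro hiT hjT
  have hmono := hW.1
  obtain ⟨hd1, hd2, hd3, hd4⟩ := hdon T hiT hjT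
  have hijT : i ∉ insert j T := by simp [Finset.mem_insert, hij, hiT]
  have hjiT : j ∉ insert i T := by simp [Finset.mem_insert, hij.symm, hjT]
  have heri : (insert i (insert j T)).erase i = insert j T := Finset.erase_insert hijT
  have herj : (insert i (insert j T)).erase j = insert i T := by
    rw [Finset.insert_comm, Finset.erase_insert hjiT]
  have hiU : i ∈ insert i (insert j T) := Finset.mem_insert_self i _
  have hjU : j ∈ insert i (insert j T) :=
    Finset.mem_insert_of_mem (Finset.mem_insert_self j T)
  by_cases hUW : insert i (insert j T) ∈ W
  case neg =>
    constructor
    · rw [alphaPlus_of_not_win hUW]; exact alphaPlus_nonneg _ _ _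
    · rw [alphaPlus_of_not_win hUW]; exact alphaPlus_nonneg _ _ _
  case pos =>
  by_cases hTW : T ∈ W
  case neg =>
    have hone : alphaPlus What i (insert i (insert j T)) = 1 := by
      apply alphaPlus_of_decisive hiU (hd1.mpr hUW)
      rw [heri]
      exact fun h => hTW (hd3.mp h)
    rw [hone]
    exact ⟨alphaPlus_le_one _ _ _, alphaPlus_le_one _ _ _⟩
  case pos =>
    have hU1W : insert i T ∈ W := hmono _ _ hTW (Finset.subset_insert i T)
    have hU2W : insert j T ∈ W := hmono _ _ hTW (Finset.subset_insert j T)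
    have hUhat : insert i (insert j T) ∈ What := hd1.mpr hUW
    have hU2hat : insert j T ∈ What := hd3.mpr hTW
    have hU1hat : insert i T ∈ What := hd2.mpr hUW
    have hsub : ∀ k ∈ T, i ∉ T.erase k ∧ j ∉ T.erase k := fun k _ =>
      ⟨fun h => hiT (Finset.mem_of_mem_erase h), fun h => hjT (Finset.mem_of_mem_erase h)⟩
    have hkerase : ∀ k ∈ T, (insert i (insert j T)).erase k
        = insert i (insert j (T.erase k)) := by
      intro k hkT
      have hik : i ≠ k := by rintro rfl; exact hiT hkT
      have hjk : j ≠ k := by rintro rfl; exact hjT hkT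
      rw [Finset.erase_insert_of_ne hik, Finset.erase_insert_of_ne hjk]
    have hAne : (LCwin W (insert i (insert j T))).Nonempty :=
      ⟨insert j T, mem_LCwin'.mpr ⟨⟨i, hiU, heri⟩, hU2W⟩⟩
    rw [alphaPlus_of_mean hiU hUhat (by rw [heri]; exact hU2hat)]
    constructor
    · -- c ≤ chat
      rw [alphaPlus_of_mean hiU hUW (by rw [heri]; exact hU2W)]
      apply mean_le_mean id (alphaPlus W i) (alphaPlus What i) hAne Function.injective_id.injOn
      · -- hmap
        intro t ht
        obtain ⟨⟨k, hk, heq⟩, htW⟩ := mem_LCwin'.mp ht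
        refine mem_LCwin'.mpr ⟨⟨k, hk, heq⟩, ?_⟩
        rcases Finset.mem_insert.mp hk with rfl | hk2
        · rw [← heq, heri]; exact hU2hat
        rcases Finset.mem_insert.mp hk2 with rfl | hkT
        · rw [← heq, herj]; exact hU1hat
        · have ht_eq : t = insert i (insert j (T.erase k)) := heq ▸ hkerase k hkT
          obtain ⟨hiT', hjT'⟩ := hsub k hkT
          rw [ht_eq]
          exact (hdon (T.erase k) hiT' hjT').1.mpr (ht_eq ▸ htW)
      · intro t _; exact alphaPlus_nonneg _ _ _
      · intro t _; exact alphaPlus_le_one _ _ _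
      · -- hfg
        intro t ht
        obtain ⟨⟨k, hk, heq⟩, htW⟩ := mem_LCwin'.mp ht
        show alphaPlus W i t ≤ alphaPlus What i t
        rcases Finset.mem_insert.mp hk with rfl | hk2
        · have ht_eq : t = insert j T := by rw [← heq, heri]
          rw [ht_eq, alphaPlus_of_notMem hijT]
          exact alphaPlus_nonneg _ _ _
        rcases Finset.mem_insert.mp hk2 with rfl | hkT
        · have ht_eq : t = insert i T := by rw [← heq, herj]
          rw [ht_eq]
          exact (key1 hW hij hdon T hiT hjT).1
        · have ht_eq : t = insert i (insert j (T.erase k)) := heq ▸ hkerase k hkT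
          obtain ⟨hiT', hjT'⟩ := hsub k hkT
          rw [ht_eq]
          exact (IH (T.erase k) (Finset.erase_ssubset hkT) hiT' hjT').1
      · -- hex
        intro s hs hsim
        obtain ⟨⟨k, hk, heq⟩, hsWhat⟩ := mem_LCwin'.mp hs
        rw [Finset.image_id] at hsim
        have hsW : s ∉ W := fun h => hsim (mem_LCwin'.mpr ⟨⟨k, hk, heq⟩, h⟩)
        exfalso
        apply hsW
        rcases Finset.mem_insert.mp hk with rfl | hk2
        · rw [← heq, heri]; exact hU2W
        rcases Finset.mem_insert.mp hk2 with rfl | hkT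
        · rw [← heq, herj]; exact hU1W
        · have hs_eq : s = insert i (insert j (T.erase k)) := heq ▸ hkerase k hkT
          obtain ⟨hiT', hjT'⟩ := hsub k hkT
          rw [hs_eq]
          exact (hdon (T.erase k) hiT' hjT').1.mp (hs_eq ▸ hsWhat)
    · -- d ≤ chat
      rw [alphaPlus_of_mean hjU hUW (by rw [herj]; exact hU1W)]
      apply mean_le_mean (fun X => X.image (Equiv.swap i j)) (alphaPlus W j) (alphaPlus What i)
        hAne ((Finset.image_injective (Equiv.swap i j).injective).injOn)
      · -- hmap
        intro t ht
        obtain ⟨⟨k, hk, heq⟩, htW⟩ := mem_LCwin'.mp ht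
        rcases Finset.mem_insert.mp hk with rfl | hk2
        · have ht_eq : t = insert j T := by rw [← heq, heri]
          rw [ht_eq, swap_image_insert_j hiT hjT]
          exact mem_LCwin'.mpr ⟨⟨j, hjU, herj⟩, hU1hat⟩
        rcases Finset.mem_insert.mp hk2 with rfl | hkT
        · have ht_eq : t = insert i T := by rw [← heq, herj]
          rw [ht_eq, swap_image_insert_i hiT hjT]
          exact mem_LCwin'.mpr ⟨⟨i, hiU, heri⟩, hU2hat⟩
        · have ht_eq : t = insert i (insert j (T.erase k)) := heq ▸ hkerase k hkT
          obtain ⟨hiT', hjT'⟩ := hsub k hkT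
          rw [ht_eq, swap_image_insert_ij hiT' hjT']
          refine mem_LCwin'.mpr ⟨⟨k, hk, hkerase k hkT⟩, ?_⟩
          exact (hdon (T.erase k) hiT' hjT').1.mpr (ht_eq ▸ htW)
      · intro t _; exact alphaPlus_nonneg _ _ _
      · intro t _; exact alphaPlus_le_one _ _ _
      · -- hfg
        intro t ht
        obtain ⟨⟨k, hk, heq⟩, htW⟩ := mem_LCwin'.mp ht
        rcases Finset.mem_insert.mp hk with rfl | hk2
        · have ht_eq : t = insert j T := by rw [← heq, heri]
          rw [ht_eq, swap_image_insert_j hiT hjT]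
          exact (key1 hW hij hdon T hiT hjT).2
        rcases Finset.mem_insert.mp hk2 with rfl | hkT
        · have ht_eq : t = insert i T := by rw [← heq, herj]
          rw [ht_eq, alphaPlus_of_notMem hjiT]
          exact alphaPlus_nonneg _ _ _
        · have ht_eq : t = insert i (insert j (T.erase k)) := heq ▸ hkerase k hkT
          obtain ⟨hiT', hjT'⟩ := hsub k hkT
          rw [ht_eq, swap_image_insert_ij hiT' hjT']
          exact (IH (T.erase k) (Finset.erase_ssubset hkT) hiT' hjT').2
      · -- hex
        intro s hs hsim
        obtain ⟨⟨k, hk, heq⟩, hsWhat⟩ := mem_LCwin'.mp hs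
        exfalso
        apply hsim
        rcases Finset.mem_insert.mp hk with hki | hk2
        · rw [hki] at heq
          refine Finset.mem_image.mpr ⟨insert i T, mem_LCwin'.mpr ⟨⟨j, hjU, herj⟩, hU1W⟩, ?_⟩
          rw [swap_image_insert_i hiT hjT, ← heq, heri]
        rcases (Finset.mem_insert.mp hk2 : k = j ∨ k ∈ T) with hkj | hkT
        · rw [hkj] at heq
          refine Finset.mem_image.mpr ⟨insert j T, mem_LCwin'.mpr ⟨⟨i, hiU, heri⟩, hU2W⟩, ?_⟩
          rw [swap_image_insert_j hiT hjT, ← heq, herj]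
        · have hs_eq : s = insert i (insert j (T.erase k)) := heq ▸ hkerase k hkT
          obtain ⟨hiT', hjT'⟩ := hsub k hkT
          have hsW : s ∈ W := by
            rw [hs_eq]
            exact (hdon (T.erase k) hiT' hjT').1.mp (hs_eq ▸ hsWhat)
          refine Finset.mem_image.mpr ⟨s, mem_LCwin'.mpr ⟨⟨k, hk, heq⟩, hsW⟩, ?_⟩
          rw [hs_eq, swap_image_insert_ij hiT' hjT']
end MainLemmas2
/-- donation and YES-efficacy scores. -/
theorem donation_alphaPlus {n : ℕ} (W What : Finset (Finset (Fin n)))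
    (hW : SimpleVotingGame W) (i j : Fin n) (hij : i ≠ j)
    (hdon : Donation W What i j) :
    ∀ S : Finset (Fin n), i ∉ S → j ∉ S →
      max (alphaPlus W i (insert i S)) (alphaPlus W j (insert j S)) ≤
        alphaPlus What i (insert i S) ∧
      max (alphaPlus W i (insert i (insert j S))) (alphaPlus W j (insert i (insert j S))) ≤
        alphaPlus What i (insert i (insert j S)) := by

  intro S hiS hjS
  constructor
  · exact max_le (key1 hW hij hdon S hiS hjS).1 (key1 hW hij hdon S hiS hjS).2
  · exact max_le (key2 hW hij hdon S hiS hjS).1 (key2 hW hij hdon S hiS hjS).2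
end
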